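/- Let A, B ⊂ ℝ^d be finite nonempty point sets with |A| = m, let R > 0, c ≥ 1, let t* be a translation with CD(A+t*, B) = CDuT(A, B), and suppose CDuT(A, B) ≤ R and ‖b_1 − b_2‖ ≥ (c+1)(1 + 2/m)R for all distinct b_1, b_2 ∈ B. For each a ∈ A let b_{a+t*} ∈ B be a nearest neighbor of a+t* in B. Then for every translation t with ‖t − t*‖ ≤ 2R/m, every a ∈ A, and every b' ∈ B with b' ≠ b_{a+t*}, one has ‖a + t − b'‖ ≥ c·‖a + t − b_{a+t*}‖. In particular (since c ≥ 1) b_{a+t*} is also a nearest neighbor of a+t in B for every a ∈ A (alignment), and this nearest neighbor is nearest by a factor of c (c-uniqueness). -/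

import Mathlib

open Finset
open scoped Classical

/-- Chamfer distance from finset `A` to finset `B` in `ℝ^d`:
`CD(A,B) = Σ_{a∈A} min_{b∈B} ‖a−b‖` (Euclidean norm). -/
noncomputable def CD {d : ℕ} (A B : Finset (EuclideanSpace ℝ (Fin d))) : ℝ :=
  ∑ a ∈ A, Metric.infDist a (B : Set (EuclideanSpace ℝ (Fin d)))

/-- The translate `A + t = {a + t : a ∈ A}`. -/
noncomputable def shiftSet {d : ℕ} (A : Finset (EuclideanSpace ℝ (Fin d)))
    (t : EuclideanSpace ℝ (Fin d)) : Finset (EuclideanSpace ℝ (Fin d)) :=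
  A.image (· + t)

/-- Chamfer distance under translation: `CDuT(A,B) = inf_{t∈ℝ^d} CD(A+t,B)`. -/
noncomputable def CDuT {d : ℕ} (A B : Finset (EuclideanSpace ℝ (Fin d))) : ℝ :=
  ⨅ t : EuclideanSpace ℝ (Fin d), CD (shiftSet A t) B

/-- Alignment and `c`-uniqueness under the separation assumption: if `OPT ≤ R`,
all points of `B` are `(c+1)(1+2/m)R`-separated, and `‖t − t*‖ ≤ 2R/m`, then for each
`a ∈ A` the nearest neighbor `nn a` of `a+t*` is nearest to `a+t` by a factor of `c`,
and is in particular still a nearest neighbor of `a+t`. -/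
theorem alignment_and_c_uniqueness {d : ℕ} (A B : Finset (EuclideanSpace ℝ (Fin d)))
    (hA : A.Nonempty) (hB : B.Nonempty) (m : ℕ) (hm : m = A.card)
    (R c : ℝ) (hR : 0 < R) (hc : 1 ≤ c)
    (tstar : EuclideanSpace ℝ (Fin d)) (hopt : CD (shiftSet A tstar) B = CDuT A B)
    (hOPT : CDuT A B ≤ R)
    (hsep : ∀ b₁ ∈ B, ∀ b₂ ∈ B, b₁ ≠ b₂ → (c + 1) * (1 + 2 / (m : ℝ)) * R ≤ ‖b₁ - b₂‖)
    (nn : EuclideanSpace ℝ (Fin d) → EuclideanSpace ℝ (Fin d))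
    (hnnB : ∀ a ∈ A, nn a ∈ B)
    (hnn : ∀ a ∈ A, ∀ b ∈ B, ‖a + tstar - nn a‖ ≤ ‖a + tstar - b‖) :
    ∀ t : EuclideanSpace ℝ (Fin d), ‖t - tstar‖ ≤ 2 * R / (m : ℝ) →
      ∀ a ∈ A,
        (∀ b' ∈ B, b' ≠ nn a → c * ‖a + t - nn a‖ ≤ ‖a + t - b'‖) ∧
        (∀ b ∈ B, ‖a + t - nn a‖ ≤ ‖a + t - b‖) := by
  intro t ht a ha
  have hm0 : (0 : ℝ) < (m : ℝ) := by
    have h : 0 < m := hm ▸ Finset.card_pos.2 hA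
    exact_mod_cast h
  have hBs : ((B : Set (EuclideanSpace ℝ (Fin d)))).Nonempty := hB
  have hstar : ‖a + tstar - nn a‖ ≤ R := by
    have h1 : ‖a + tstar - nn a‖ ≤ Metric.infDist (a + tstar) (B : Set (EuclideanSpace ℝ (Fin d))) := by
      by_contra hlt
      push_neg at hlt
      obtain ⟨y, hy, hdy⟩ := (Metric.infDist_lt_iff hBs).1 hlt
      rw [dist_eq_norm] at hdy
      exact absurd (hnn a ha y hy) (not_le.2 hdy)
    have h2 : Metric.infDist (a + tstar) (B : Set (EuclideanSpace ℝ (Fin d))) ≤ CD (shiftSet A tstar) B := by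
      rw [CD]
      have hmem : a + tstar ∈ shiftSet A tstar := by
        rw [shiftSet]; exact Finset.mem_image_of_mem _ ha
      exact Finset.single_le_sum (fun (i : EuclideanSpace ℝ (Fin d)) _ => Metric.infDist_nonneg (x := i) (s := (B : Set (EuclideanSpace ℝ (Fin d))))) hmem
    calc ‖a + tstar - nn a‖ ≤ CD (shiftSet A tstar) B := h1.trans h2
      _ = CDuT A B := hopt
      _ ≤ R := hOPT
  have hxt : ‖a + t - nn a‖ ≤ (1 + 2 / (m : ℝ)) * R := by
    have heq : a + t - nn a = (a + tstar - nn a) + (t - tstar) := by abel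
    calc ‖a + t - nn a‖ = ‖(a + tstar - nn a) + (t - tstar)‖ := by rw [heq]
      _ ≤ ‖a + tstar - nn a‖ + ‖t - tstar‖ := norm_add_le _ _
      _ ≤ R + 2 * R / (m : ℝ) := add_le_add hstar ht
      _ = (1 + 2 / (m : ℝ)) * R := by field_simp
  have key : ∀ b' ∈ B, b' ≠ nn a → c * ‖a + t - nn a‖ ≤ ‖a + t - b'‖ := by
    intro b' hb' hne
    have hsep' := hsep b' hb' (nn a) (hnnB a ha) hne
    have htri : ‖b' - nn a‖ ≤ ‖a + t - b'‖ + ‖a + t - nn a‖ := by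
      have heq : b' - nn a = -(a + t - b') + (a + t - nn a) := by abel
      calc ‖b' - nn a‖ = ‖-(a + t - b') + (a + t - nn a)‖ := by rw [heq]
        _ ≤ ‖-(a + t - b')‖ + ‖a + t - nn a‖ := norm_add_le _ _
        _ = ‖a + t - b'‖ + ‖a + t - nn a‖ := by rw [norm_neg]
    have hc1 : (0 : ℝ) ≤ c + 1 := by linarith
    have hmul : (c + 1) * ‖a + t - nn a‖ ≤ (c + 1) * ((1 + 2 / (m : ℝ)) * R) :=
      mul_le_mul_of_nonneg_left hxt hc1
    nlinarith [hsep', htri, hmul]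
  refine ⟨key, ?_⟩
  intro b hb
  by_cases hbe : b = nn a
  · rw [hbe]
  · have h := key b hb hbe
    nlinarith [norm_nonneg (a + t - nn a)]
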